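/- Cyclic-shift example: Let U₁, …, U_d be i.i.d. uniform on (0,1), and let X be the d × d stochastic matrix with X_{k,k} = U_k, X_{k,k+1 (mod d)} = 1 − U_k, and all other entries zero. If V = (V₁, …, V_d) has i.i.d. Gamma(2,1) components independent of X, then V·X has the same distribution as V. -/

import Mathlib

open MeasureTheory ProbabilityTheory

noncomputable section
namespace CyclicShiftAux

open Real Set ENNReal

lemma expPDF_eq (x : ℝ) :
    gammaPDF 1 1 x = if 0 ≤ x then ENNReal.ofReal (Real.exp (-x)) else 0 := by
  rcases le_or_gt 0 x with hx | hx
  · rw [gammaPDF_of_nonneg hx, if_pos hx]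
    norm_num [Real.Gamma_one]
  · rw [gammaPDF_of_neg hx, if_neg (not_le.mpr hx)]

lemma gamma2PDF_eq (x : ℝ) :
    gammaPDF 2 1 x = if 0 ≤ x then ENNReal.ofReal (x * Real.exp (-x)) else 0 := by
  rcases le_or_gt 0 x with hx | hx
  · rw [gammaPDF_of_nonneg hx, if_pos hx]
    norm_num [Real.Gamma_two]
  · rw [gammaPDF_of_neg hx, if_neg (not_le.mpr hx)]

lemma gamma2PDF_of_nonpos {x : ℝ} (hx : x ≤ 0) : gammaPDF 2 1 x = 0 := by
  rcases lt_or_eq_of_le hx with h | h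
  · rw [gamma2PDF_eq, if_neg (not_le.mpr h)]
  · subst h; simp [gamma2PDF_eq]

/-- product of densities -/
lemma prod_withDensity {α β : Type*} [MeasurableSpace α] [MeasurableSpace β]
    (μ : Measure α) (ν : Measure β) [SigmaFinite μ] [SigmaFinite ν]
    {f : α → ℝ≥0∞} {g : β → ℝ≥0∞} (hf : Measurable f) (hg : Measurable g)
    [SigmaFinite (μ.withDensity f)] [SigmaFinite (ν.withDensity g)] :
    (μ.withDensity f).prod (ν.withDensity g)
      = (μ.prod ν).withDensity (fun p => f p.1 * g p.2) := by
  refine (Measure.prod_eq (μ := μ.withDensity f) (ν := ν.withDensity g) fun s t hs ht => ?_)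
  rw [withDensity_apply _ (hs.prod ht), ← Measure.prod_restrict,
    lintegral_prod _ ((by fun_prop : Measurable fun (a : α × β) => f a.1 * g a.2)).aemeasurable]
  simp only
  rw [withDensity_apply _ hs, withDensity_apply _ ht]
  calc ∫⁻ x in s, ∫⁻ y in t, f x * g y ∂ν ∂μ
      = ∫⁻ x in s, f x * ∫⁻ y in t, g y ∂ν ∂μ :=
        lintegral_congr fun x => lintegral_const_mul _ hg
    _ = (∫⁻ x in s, f x ∂μ) * ∫⁻ y in t, g y ∂ν := lintegral_mul_const _ hf

lemma map_withDensity_comp {α β : Type*} [MeasurableSpace α] [MeasurableSpace β]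
    (μ : Measure α) {g : α → β} (hg : Measurable g) {H : β → ℝ≥0∞} (hH : Measurable H) :
    Measure.map g (μ.withDensity (fun x => H (g x))) = (Measure.map g μ).withDensity H := by
  ext A hA
  rw [Measure.map_apply hg hA, withDensity_apply _ (hg hA), withDensity_apply _ hA,
    setLIntegral_map hA hH hg]

lemma map_fst_withDensity {α β : Type*} [MeasurableSpace α] [MeasurableSpace β]
    (μ : Measure α) (ν : Measure β) [SigmaFinite μ] [SigmaFinite ν]
    {k : α × β → ℝ≥0∞} (hk : Measurable k) :
    Measure.map Prod.fst ((μ.prod ν).withDensity k)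
      = μ.withDensity (fun x => ∫⁻ y, k (x, y) ∂ν) := by
  ext A hA
  have hpre : (Prod.fst : α × β → α) ⁻¹' A = A ×ˢ Set.univ := by
    ext p; simp
  rw [Measure.map_apply measurable_fst hA, withDensity_apply _ (measurable_fst hA),
    withDensity_apply _ hA, hpre, ← Measure.prod_restrict, Measure.restrict_univ,
    lintegral_prod _ hk.aemeasurable]

def g2 : ℝ × ℝ → ℝ × ℝ := fun p => (p.1 * p.2, (1 - p.1) * p.2)

lemma measurable_g2 : Measurable g2 := by unfold g2; fun_prop

def gDeriv (p : ℝ × ℝ) : ℝ × ℝ →L[ℝ] ℝ × ℝ :=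
  (p.1 • ContinuousLinearMap.snd ℝ ℝ ℝ + p.2 • ContinuousLinearMap.fst ℝ ℝ ℝ).prod
    ((1 - p.1) • ContinuousLinearMap.snd ℝ ℝ ℝ +
      p.2 • (0 - ContinuousLinearMap.fst ℝ ℝ ℝ))

lemma hasFDerivAt_g2 (p : ℝ × ℝ) : HasFDerivAt g2 (gDeriv p) p :=
  (hasFDerivAt_fst.mul hasFDerivAt_snd).prodMk
    (((hasFDerivAt_const (1:ℝ) p).sub hasFDerivAt_fst).mul hasFDerivAt_snd)

lemma gDeriv_det (p : ℝ × ℝ) : (gDeriv p).det = p.2 := by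
  have : (gDeriv p).det = LinearMap.det ((gDeriv p) : ℝ × ℝ →ₗ[ℝ] ℝ × ℝ) := rfl
  rw [this, ← LinearMap.det_toMatrix (Module.Basis.finTwoProd ℝ), Matrix.det_fin_two]
  simp [LinearMap.toMatrix_apply, gDeriv, Module.Basis.finTwoProd_zero, Module.Basis.finTwoProd_one,
    Module.Basis.coe_finTwoProd_repr]
  ring

def sSet : Set (ℝ × ℝ) := Ioo 0 1 ×ˢ Ioi 0

lemma sSet_meas : MeasurableSet sSet := measurableSet_Ioo.prod measurableSet_Ioi

lemma g2_injOn : InjOn g2 sSet := by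
  rintro ⟨u, v⟩ ⟨⟨_, _⟩, hv⟩ ⟨u', v'⟩ ⟨⟨_, _⟩, hv'⟩ h
  simp only [g2, Prod.mk.injEq] at h
  obtain ⟨h1, h2⟩ := h
  have hvv : v = v' := by nlinarith
  subst hvv
  have : u = u' := mul_right_cancel₀ (ne_of_gt hv) h1
  simp [this]

lemma g2_image : g2 '' sSet = Ioi 0 ×ˢ Ioi 0 := by
  ext ⟨x, y⟩
  constructor
  · rintro ⟨⟨u, v⟩, ⟨⟨hu0, hu1⟩, hv⟩, h⟩
    simp only [g2, Prod.mk.injEq] at h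
    obtain ⟨rfl, rfl⟩ := h
    exact ⟨mul_pos hu0 hv, mul_pos (by simp only at hu1; exact (sub_pos.mpr hu1 : (0:ℝ) < 1 - u)) hv⟩
  · rintro ⟨hx, hy⟩
    simp only [mem_Ioi] at hx hy
    refine ⟨(x / (x + y), x + y), ⟨⟨?_, ?_⟩, ?_⟩, ?_⟩
    · positivity
    · rw [div_lt_one (by positivity)]; linarith
    · simp only [mem_Ioi]; positivity
    · simp only [g2, Prod.mk.injEq]
      have hxy : x + y ≠ 0 := by positivity
      constructor
      · field_simp
      · field_simp
        ring

/-- the density on the target side -/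
def Hd : ℝ × ℝ → ℝ≥0∞ := fun q => ENNReal.ofReal (Real.exp (-(q.1 + q.2)))

lemma measurable_Hd : Measurable Hd := by unfold Hd; fun_prop

lemma measurable_Hd_g2 : Measurable fun p => Hd (g2 p) := measurable_Hd.comp measurable_g2

lemma measurable_gPDF (a r : ℝ) : Measurable (gammaPDF a r) :=
  (measurable_gammaPDFReal a r).ennreal_ofReal

lemma coreA :
    Measure.map g2 (((volume : Measure ℝ).restrict (Ioo 0 1)).prod (gammaMeasure 2 1))
      = (gammaMeasure 1 1).prod (gammaMeasure 1 1) := by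
  haveI h1prob : IsProbabilityMeasure (gammaMeasure 1 1) :=
    isProbabilityMeasure_gammaMeasure one_pos one_pos
  haveI h2prob : IsProbabilityMeasure (gammaMeasure 2 1) :=
    isProbabilityMeasure_gammaMeasure two_pos one_pos
  haveI : SigmaFinite ((volume : Measure ℝ).withDensity (gammaPDF 1 1)) :=
    inferInstanceAs (SigmaFinite (gammaMeasure 1 1))
  haveI : SigmaFinite ((volume : Measure ℝ).withDensity (gammaPDF 2 1)) :=
    inferInstanceAs (SigmaFinite (gammaMeasure 2 1))
  haveI : SigmaFinite ((volume : Measure ℝ).withDensity ((Ioo (0:ℝ) 1).indicator 1)) := by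
    rw [withDensity_indicator_one measurableSet_Ioo]
    infer_instance
  -- Step 1 : rewrite source as a density over the restricted plane measure
  have hDmeas : Measurable fun p : ℝ × ℝ => ENNReal.ofReal |(gDeriv p).det| := by
    simp only [gDeriv_det]; fun_prop
  have h1 : ((volume : Measure ℝ).restrict (Ioo 0 1)).prod (gammaMeasure 2 1)
      = (((volume : Measure (ℝ × ℝ)).restrict sSet).withDensity
          fun p => ENNReal.ofReal |(gDeriv p).det|).withDensity (fun p => Hd (g2 p)) := by
    rw [← withDensity_mul _ hDmeas measurable_Hd_g2,
      ← withDensity_indicator_one sSet_meas,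
      ← withDensity_mul _ (measurable_one.indicator sSet_meas)
        (show Measurable ((fun p : ℝ × ℝ => ENNReal.ofReal |(gDeriv p).det|) * fun p => Hd (g2 p)) from hDmeas.mul measurable_Hd_g2),
      ← withDensity_indicator_one measurableSet_Ioo (μ := (volume : Measure ℝ)),
      show gammaMeasure 2 1 = (volume : Measure ℝ).withDensity (gammaPDF 2 1) from rfl,
      prod_withDensity _ _ (measurable_one.indicator measurableSet_Ioo)
        (measurable_gPDF 2 1),
      ← Measure.volume_eq_prod]
    congr 1
    funext p
    simp only [gDeriv_det, g2, Hd, Pi.mul_apply]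
    by_cases hs : p ∈ sSet
    · have hs' := hs
      obtain ⟨⟨hu0, hu1⟩, hv⟩ := hs'
      have hmem1 : p.1 ∈ Ioo (0:ℝ) 1 := ⟨hu0, hu1⟩
      rw [indicator_of_mem hs, indicator_of_mem hmem1, gamma2PDF_eq, if_pos (le_of_lt hv)]
      simp only [Pi.one_apply, one_mul]
      rw [abs_of_pos hv, ← ENNReal.ofReal_mul (le_of_lt hv)]
      congr 2
      rw [show -(p.1 * p.2 + (1 - p.1) * p.2) = -p.2 by ring]
    · rw [indicator_of_notMem hs]
      simp only [Pi.one_apply, zero_mul]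
      rcases not_and_or.mp hs with h | h
      · rw [indicator_of_notMem h, zero_mul]
      · have : p.2 ≤ 0 := le_of_not_gt h
        rw [gamma2PDF_of_nonpos this, mul_zero]
  rw [h1,
    map_withDensity_comp _ measurable_g2 measurable_Hd,
    map_withDensity_abs_det_fderiv_eq_addHaar volume sSet_meas.nullMeasurableSet
      (fun x _ => (hasFDerivAt_g2 x).hasFDerivWithinAt) g2_injOn,
    g2_image]
  -- Step 2 : identify the result with the product of two exponential laws
  rw [show gammaMeasure 1 1 = (volume : Measure ℝ).withDensity (gammaPDF 1 1) from rfl,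
    prod_withDensity _ _ (measurable_gPDF 1 1) (measurable_gPDF 1 1),
    ← Measure.volume_eq_prod,
    ← withDensity_indicator_one (measurableSet_Ioi.prod measurableSet_Ioi),
    ← withDensity_mul _ (measurable_one.indicator (measurableSet_Ioi.prod measurableSet_Ioi))
      measurable_Hd]
  refine withDensity_congr_ae ?_
  have hnull : (volume : Measure (ℝ × ℝ))
      (({0} : Set ℝ) ×ˢ (univ : Set ℝ) ∪ (univ : Set ℝ) ×ˢ ({0} : Set ℝ)) = 0 := by
    apply measure_union_null
    · rw [Measure.volume_eq_prod, Measure.prod_prod]; simp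
    · rw [Measure.volume_eq_prod, Measure.prod_prod]; simp
  filter_upwards [measure_eq_zero_iff_ae_notMem.mp hnull] with q hq
  have hq1 : q.1 ≠ 0 := by intro h; exact hq (Or.inl ⟨by simp [h], trivial⟩)
  have hq2 : q.2 ≠ 0 := by intro h; exact hq (Or.inr ⟨trivial, by simp [h]⟩)
  simp only [Pi.mul_apply]
  by_cases h1 : 0 < q.1
  · by_cases h2 : 0 < q.2
    · have hmem : q ∈ Ioi (0:ℝ) ×ˢ Ioi (0:ℝ) := ⟨h1, h2⟩
      rw [indicator_of_mem hmem, expPDF_eq, expPDF_eq, if_pos h1.le, if_pos h2.le]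
      simp only [Pi.one_apply, one_mul, Hd]
      rw [← ENNReal.ofReal_mul (Real.exp_nonneg _), ← Real.exp_add]
      congr 2
      ring
    · have h2' : q.2 < 0 := lt_of_le_of_ne (le_of_not_gt h2) hq2
      have hmem : q ∉ Ioi (0:ℝ) ×ˢ Ioi (0:ℝ) := by
        intro hc; exact absurd hc.2 (by simpa using not_lt.mpr h2'.le)
      rw [indicator_of_notMem hmem, expPDF_eq q.2, if_neg (not_le.mpr h2'), mul_zero, zero_mul]
  · have h1' : q.1 < 0 := lt_of_le_of_ne (le_of_not_gt h1) hq1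
    have hmem : q ∉ Ioi (0:ℝ) ×ˢ Ioi (0:ℝ) := by
      intro hc; exact absurd hc.1 (by simpa using not_lt.mpr h1'.le)
    rw [indicator_of_notMem hmem, expPDF_eq q.1, if_neg (not_le.mpr h1'), zero_mul, zero_mul]

lemma coreB :
    Measure.map (fun p : ℝ × ℝ => p.1 + p.2) ((gammaMeasure 1 1).prod (gammaMeasure 1 1))
      = gammaMeasure 2 1 := by
  haveI h1prob : IsProbabilityMeasure (gammaMeasure 1 1) :=
    isProbabilityMeasure_gammaMeasure one_pos one_pos
  haveI : SigmaFinite ((volume : Measure ℝ).withDensity (gammaPDF 1 1)) :=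
    inferInstanceAs (SigmaFinite (gammaMeasure 1 1))
  set k : ℝ × ℝ → ℝ≥0∞ := fun q => gammaPDF 1 1 (q.1 - q.2) * gammaPDF 1 1 q.2 with hk
  have hkmeas : Measurable k := by
    apply Measurable.mul (f := fun q : ℝ × ℝ => gammaPDF 1 1 (q.1 - q.2)) (g := fun q : ℝ × ℝ => gammaPDF 1 1 q.2)
    · exact (measurable_gPDF 1 1).comp (measurable_fst.sub measurable_snd)
    · exact (measurable_gPDF 1 1).comp measurable_snd
  have hT : MeasurePreserving (fun z : ℝ × ℝ => (z.1 + z.2, z.2))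
      ((volume : Measure ℝ).prod volume) ((volume : Measure ℝ).prod volume) :=
    measurePreserving_add_prod volume volume
  have hprod : (gammaMeasure 1 1).prod (gammaMeasure 1 1)
      = ((volume : Measure ℝ).prod volume).withDensity (fun z => k (z.1 + z.2, z.2)) := by
    rw [show gammaMeasure 1 1 = (volume : Measure ℝ).withDensity (gammaPDF 1 1) from rfl,
      prod_withDensity _ _ (measurable_gPDF 1 1) (measurable_gPDF 1 1)]
    congr 1
    funext z
    simp [hk]
  have hmm : Measure.map (fun z : ℝ × ℝ => (z.1 + z.2, z.2))
      ((gammaMeasure 1 1).prod (gammaMeasure 1 1))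
      = ((volume : Measure ℝ).prod volume).withDensity k := by
    rw [hprod, map_withDensity_comp _ hT.measurable hkmeas, hT.map_eq]
  have hsplit : (fun p : ℝ × ℝ => p.1 + p.2)
      = Prod.fst ∘ (fun z : ℝ × ℝ => (z.1 + z.2, z.2)) := rfl
  rw [hsplit, ← Measure.map_map measurable_fst hT.measurable, hmm,
    map_fst_withDensity _ _ hkmeas]
  show (volume : Measure ℝ).withDensity _ = (volume : Measure ℝ).withDensity (gammaPDF 2 1)
  refine withDensity_congr_ae ?_
  have : ({(0:ℝ)} : Set ℝ) ∈ {s | volume sᶜᶜ = 0} := by simp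
  filter_upwards [measure_eq_zero_iff_ae_notMem.mp (Real.volume_singleton (a := 0))] with x hx
  have hx0 : x ≠ 0 := hx
  rcases lt_or_gt_of_ne hx0 with hneg | hpos
  · have hz : ∀ y : ℝ, k (x, y) = 0 := by
      intro y
      rcases lt_or_ge y 0 with hy | hy
      · rw [show k (x, y) = gammaPDF 1 1 (x - y) * gammaPDF 1 1 y from rfl,
          expPDF_eq y, if_neg (not_le.mpr hy), mul_zero]
      · rw [show k (x, y) = gammaPDF 1 1 (x - y) * gammaPDF 1 1 y from rfl,
          expPDF_eq (x - y), if_neg (not_le.mpr (by linarith)), zero_mul]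
    simp only [hz, lintegral_zero]
    rw [gamma2PDF_eq, if_neg (not_le.mpr hneg)]
  · have hint : (fun y => k (x, y))
        = (Icc (0:ℝ) x).indicator (fun _ => ENNReal.ofReal (Real.exp (-x))) := by
      funext y
      by_cases hy : y ∈ Icc (0:ℝ) x
      · rw [indicator_of_mem hy,
          show k (x, y) = gammaPDF 1 1 (x - y) * gammaPDF 1 1 y from rfl,
          expPDF_eq (x - y), expPDF_eq y, if_pos (by linarith [hy.2] : (0:ℝ) ≤ x - y),
          if_pos hy.1, ← ENNReal.ofReal_mul (Real.exp_nonneg _), ← Real.exp_add]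
        congr 2
        ring
      · rw [indicator_of_notMem hy]
        rcases not_and_or.mp hy with h | h
        · rw [show k (x, y) = gammaPDF 1 1 (x - y) * gammaPDF 1 1 y from rfl,
            expPDF_eq y, if_neg h, mul_zero]
        · rw [show k (x, y) = gammaPDF 1 1 (x - y) * gammaPDF 1 1 y from rfl,
            expPDF_eq (x - y), if_neg (not_le.mpr (by linarith [lt_of_not_ge h])), zero_mul]
    rw [hint, lintegral_indicator measurableSet_Icc, setLIntegral_const,
      Real.volume_Icc, gamma2PDF_eq, if_pos hpos.le,
      ← ENNReal.ofReal_mul (Real.exp_nonneg _)]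
    congr 1
    ring

lemma shiftPreserving (d : ℕ) (m : Measure ℝ) [SigmaFinite m] :
    MeasurePreserving (fun (b : Fin (d + 2) → ℝ) j => b (j - 1))
      (Measure.pi fun _ => m) (Measure.pi fun _ => m) := by
  have hmeas : Measurable (fun (b : Fin (d + 2) → ℝ) j => b (j - 1)) :=
    measurable_pi_iff.mpr fun j => measurable_pi_apply (j - 1)
  constructor
  · exact hmeas
  refine (Measure.pi_eq fun s hs => ?_).symm
  rw [Measure.map_apply hmeas (MeasurableSet.univ_pi hs)]
  have hpre : (fun (b : Fin (d + 2) → ℝ) j => b (j - 1)) ⁻¹' (Set.univ.pi s)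
      = Set.univ.pi (fun k => s (k + 1)) := by
    ext b
    simp only [Set.mem_preimage, Set.mem_pi, Set.mem_univ, true_imp_iff]
    constructor
    · intro h k
      have := h (k + 1)
      rwa [add_sub_cancel_right] at this
    · intro h j
      have := h (j - 1)
      rwa [sub_add_cancel] at this
  rw [hpre, Measure.pi_pi]
  exact Fintype.prod_equiv (Equiv.addRight (1 : Fin (d + 2))) _ _ (fun k => rfl)

lemma mainPi (d : ℕ) :
    Measure.map (fun p : (Fin (d + 2) → ℝ) × (Fin (d + 2) → ℝ) =>
        fun j => p.2 j * p.1 j + p.2 (j - 1) * (1 - p.1 (j - 1)))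
      ((Measure.pi fun _ => (volume : Measure ℝ).restrict (Ioo 0 1)).prod
        (Measure.pi fun _ => gammaMeasure 2 1))
      = Measure.pi fun _ => gammaMeasure 2 1 := by
  haveI h1prob : IsProbabilityMeasure (gammaMeasure 1 1) :=
    isProbabilityMeasure_gammaMeasure one_pos one_pos
  haveI h2prob : IsProbabilityMeasure (gammaMeasure 2 1) :=
    isProbabilityMeasure_gammaMeasure two_pos one_pos
  haveI huprob : IsProbabilityMeasure ((volume : Measure ℝ).restrict (Ioo 0 1)) :=
    ⟨by simp [Real.volume_Ioo]⟩
  set I := Fin (d + 2)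
  -- the chain of measure preserving maps
  have e1 : MeasurePreserving (MeasurableEquiv.arrowProdEquivProdArrow ℝ ℝ I).symm
      ((Measure.pi fun _ : I => (volume : Measure ℝ).restrict (Ioo 0 1)).prod
        (Measure.pi fun _ : I => gammaMeasure 2 1))
      (Measure.pi fun _ : I => ((volume : Measure ℝ).restrict (Ioo 0 1)).prod
        (gammaMeasure 2 1)) :=
    (measurePreserving_arrowProdEquivProdArrow ℝ ℝ I _ _).symm _
  have e2 : MeasurePreserving (fun (q : I → ℝ × ℝ) j => g2 (q j))
      (Measure.pi fun _ : I => ((volume : Measure ℝ).restrict (Ioo 0 1)).prod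
        (gammaMeasure 2 1))
      (Measure.pi fun _ : I => (gammaMeasure 1 1).prod (gammaMeasure 1 1)) :=
    measurePreserving_pi _ _ (fun _ => ⟨measurable_g2, coreA⟩)
  have e3 : MeasurePreserving (MeasurableEquiv.arrowProdEquivProdArrow ℝ ℝ I)
      (Measure.pi fun _ : I => (gammaMeasure 1 1).prod (gammaMeasure 1 1))
      ((Measure.pi fun _ : I => gammaMeasure 1 1).prod
        (Measure.pi fun _ : I => gammaMeasure 1 1)) :=
    measurePreserving_arrowProdEquivProdArrow ℝ ℝ I _ _
  have e4 : MeasurePreserving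
      (Prod.map (id : (I → ℝ) → I → ℝ) (fun (b : I → ℝ) j => b (j - 1)))
      ((Measure.pi fun _ : I => gammaMeasure 1 1).prod
        (Measure.pi fun _ : I => gammaMeasure 1 1))
      ((Measure.pi fun _ : I => gammaMeasure 1 1).prod
        (Measure.pi fun _ : I => gammaMeasure 1 1)) :=
    (MeasurePreserving.id _).prod (shiftPreserving d (gammaMeasure 1 1))
  have e5 : MeasurePreserving (MeasurableEquiv.arrowProdEquivProdArrow ℝ ℝ I).symm
      ((Measure.pi fun _ : I => gammaMeasure 1 1).prod
        (Measure.pi fun _ : I => gammaMeasure 1 1))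
      (Measure.pi fun _ : I => (gammaMeasure 1 1).prod (gammaMeasure 1 1)) :=
    (measurePreserving_arrowProdEquivProdArrow ℝ ℝ I _ _).symm _
  have e6 : MeasurePreserving (fun (q : I → ℝ × ℝ) j => (q j).1 + (q j).2)
      (Measure.pi fun _ : I => (gammaMeasure 1 1).prod (gammaMeasure 1 1))
      (Measure.pi fun _ : I => gammaMeasure 2 1) :=
    measurePreserving_pi _ _ (fun _ => ⟨by fun_prop, coreB⟩)
  have comp := e6.comp (e5.comp (e4.comp (e3.comp (e2.comp e1))))
  have hfun : ((fun (q : I → ℝ × ℝ) j => (q j).1 + (q j).2) ∘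
      ((MeasurableEquiv.arrowProdEquivProdArrow ℝ ℝ I).symm ∘
        (Prod.map (id : (I → ℝ) → I → ℝ) (fun (b : I → ℝ) j => b (j - 1)) ∘
          ((MeasurableEquiv.arrowProdEquivProdArrow ℝ ℝ I) ∘
            ((fun (q : I → ℝ × ℝ) j => g2 (q j)) ∘
              (MeasurableEquiv.arrowProdEquivProdArrow ℝ ℝ I).symm)))))
      = (fun p : (I → ℝ) × (I → ℝ) =>
          fun j => p.2 j * p.1 j + p.2 (j - 1) * (1 - p.1 (j - 1))) := by
    funext p
    funext j
    simp [MeasurableEquiv.arrowProdEquivProdArrow, Equiv.arrowProdEquivProdArrow, g2]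
    ring
  rw [← hfun]
  exact comp.map_eq

end CyclicShiftAux

open CyclicShiftAux Real Set ENNReal

/-- Cyclic-shift example (dimension `d + 2 ≥ 2`): `X` has `X_{k,k} = U_k`,
`X_{k,k+1 (mod d)} = 1-U_k` and zeros elsewhere, with `U_k` i.i.d. uniform on
`(0,1)`. If `V` has i.i.d. Gamma(2,1) components independent of `X`, then
`V·X =d V`. -/
theorem cyclic_shift_gamma_invariance
    {Ω : Type*} [MeasureSpace Ω] [IsProbabilityMeasure (ℙ : Measure Ω)]
    (d : ℕ)
    (U : Ω → Fin (d + 2) → ℝ) (hU : Measurable U)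
    (hUlaw : Measure.map U ℙ
      = Measure.pi (fun _ => (volume : Measure ℝ).restrict (Set.Ioo 0 1)))
    (X : Ω → Fin (d + 2) → Fin (d + 2) → ℝ)
    (hXdef : ∀ ω k j, X ω k j =
      if j = k then U ω k else if j = k + 1 then 1 - U ω k else 0)
    (V : Ω → Fin (d + 2) → ℝ) (hV : Measurable V)
    (hVlaw : Measure.map V ℙ = Measure.pi (fun _ => gammaMeasure 2 1))
    (hVX : IndepFun V X ℙ) :
    Measure.map (fun ω j => ∑ k, V ω k * X ω k j) ℙ = Measure.map V ℙ := by
  classical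
  have hone : (1 : Fin (d + 2)) ≠ 0 := by
    simp [Fin.ext_iff]
  have hψ : Measurable (fun (M : Fin (d + 2) → Fin (d + 2) → ℝ) k => M k k) :=
    measurable_pi_iff.mpr fun k => (measurable_pi_apply k).comp (measurable_pi_apply k)
  have hUV : IndepFun U V ℙ := by
    have h := (hVX.comp measurable_id hψ).symm
    have hcomp : (fun (M : Fin (d + 2) → Fin (d + 2) → ℝ) k => M k k) ∘ X = U := by
      funext ω
      funext k
      simp [Function.comp, hXdef ω k k]
    rwa [hcomp, Function.id_comp] at h
  have hjoint : Measure.map (fun ω => (U ω, V ω)) ℙ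
      = (Measure.map U ℙ).prod (Measure.map V ℙ) :=
    (indepFun_iff_map_prod_eq_prod_map_map hU.aemeasurable hV.aemeasurable).mp hUV
  have hΦmeas : Measurable (fun p : (Fin (d + 2) → ℝ) × (Fin (d + 2) → ℝ) =>
      fun j => p.2 j * p.1 j + p.2 (j - 1) * (1 - p.1 (j - 1))) := by
    refine measurable_pi_iff.mpr fun j => ?_
    fun_prop
  have hfun : (fun ω (j : Fin (d + 2)) => ∑ k, V ω k * X ω k j)
      = (fun p : (Fin (d + 2) → ℝ) × (Fin (d + 2) → ℝ) =>
          fun j => p.2 j * p.1 j + p.2 (j - 1) * (1 - p.1 (j - 1)))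
        ∘ (fun ω => (U ω, V ω)) := by
    funext ω j
    simp only [Function.comp_apply]
    have hterm : ∀ k : Fin (d + 2), V ω k * X ω k j
        = (if j = k then V ω j * U ω j else 0)
          + (if k = j - 1 then V ω (j - 1) * (1 - U ω (j - 1)) else 0) := by
      intro k
      rw [hXdef ω k j]
      by_cases h1 : j = k
      · subst h1
        have hne : ¬ (j = j - 1) := by
          intro hc
          exact hone (left_eq_add.mp (sub_eq_iff_eq_add.mp hc.symm))
        rw [if_pos rfl, if_pos rfl, if_neg hne, add_zero]
      · rw [if_neg h1]
        by_cases h2 : j = k + 1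
        · have hk : k = j - 1 := by rw [h2, add_sub_cancel_right]
          rw [if_pos h2, if_neg h1, if_pos hk, hk, zero_add]
        · have hk : ¬ (k = j - 1) := fun hc => h2 (by rw [hc, sub_add_cancel])
          rw [if_neg h2, if_neg h1, if_neg hk, mul_zero, add_zero]
    rw [Finset.sum_congr rfl (fun k _ => hterm k), Finset.sum_add_distrib,
      Finset.sum_ite_eq Finset.univ j (fun _ => V ω j * U ω j),
      Finset.sum_ite_eq' Finset.univ (j - 1) (fun _ => V ω (j - 1) * (1 - U ω (j - 1))),
      if_pos (Finset.mem_univ _), if_pos (Finset.mem_univ _)]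
  rw [hfun, ← Measure.map_map hΦmeas (hU.prodMk hV), hjoint, hUlaw, hVlaw]
  exact mainPi d
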